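/- Let χ₁, χ₂ be defined by χᵢ(y) = -(η/νᵢ²(y))∫_{-∞}^y νᵢ²(s)ds for positive continuous functions ν₁, ν₂ satisfying the standard bounds and lying within δ of ν₀ in L² ∩ L^∞ norm on (-∞, ε^{-2/3}), with δ < ½min(‖ν₀‖_{L²(-∞,0)}, ν₀(y₀)) for a fixed y₀ < 0. Then there is an ε-independent constant C(y₀) such that ‖χ₁-χ₂‖_{L^∞(y₀,0)} ≤ C(y₀)|η|(‖ν₁-ν₂‖_{L²(-∞,ε^{-2/3})} + ‖ν₁-ν₂‖_{L^∞(-∞,ε^{-2/3})}). -/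

import Mathlib

open Set Filter MeasureTheory

/-- Cauchy–Schwarz for real integrals. -/
lemma my_cauchy_schwarz {μ : Measure ℝ} {f g : ℝ → ℝ}
    (hf : AEStronglyMeasurable f μ) (hg : AEStronglyMeasurable g μ)
    (hf2 : Integrable (fun x => f x ^ 2) μ) (hg2 : Integrable (fun x => g x ^ 2) μ) :
    ∫ x, |f x| * |g x| ∂μ ≤
      Real.sqrt (∫ x, f x ^ 2 ∂μ) * Real.sqrt (∫ x, g x ^ 2 ∂μ) := by
  have hpq : Real.HolderConjugate 2 2 := Real.holderConjugate_iff.mpr ⟨one_lt_two, by norm_num⟩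
  have h2 : ENNReal.ofReal (2 : ℝ) = 2 := by norm_num
  have hmf : MemLp (fun x => |f x|) (ENNReal.ofReal 2) μ := by
    rw [h2]
    exact ((memLp_two_iff_integrable_sq hf).mpr hf2).abs
  have hmg : MemLp (fun x => |g x|) (ENNReal.ofReal 2) μ := by
    rw [h2]
    exact ((memLp_two_iff_integrable_sq hg).mpr hg2).abs
  have h := MeasureTheory.integral_mul_le_Lp_mul_Lq_of_nonneg hpq
    (ae_of_all _ fun x => abs_nonneg (f x)) (ae_of_all _ fun x => abs_nonneg (g x)) hmf hmg
  have e1 : ∀ x : ℝ, |f x| ^ (2 : ℝ) = f x ^ 2 := fun x => by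
    rw [show (2:ℝ) = ((2:ℕ):ℝ) by norm_num, Real.rpow_natCast, sq_abs]
  have e2 : ∀ x : ℝ, |g x| ^ (2 : ℝ) = g x ^ 2 := fun x => by
    rw [show (2:ℝ) = ((2:ℕ):ℝ) by norm_num, Real.rpow_natCast, sq_abs]
  simp only [e1, e2] at h
  calc ∫ x, |f x| * |g x| ∂μ
      ≤ (∫ x, f x ^ 2 ∂μ) ^ (1/(2:ℝ)) * (∫ x, g x ^ 2 ∂μ) ^ (1/(2:ℝ)) := h
    _ = Real.sqrt (∫ x, f x ^ 2 ∂μ) * Real.sqrt (∫ x, g x ^ 2 ∂μ) := by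
        rw [Real.sqrt_eq_rpow, Real.sqrt_eq_rpow]

/-- Pure algebra for the final estimate. -/
lemma my_key_alg (η a b n1 n2 m B S D M C : ℝ)
    (hm : 0 < m) (hn1 : m ≤ n1) (hn2 : m ≤ n2)
    (hb0 : 0 ≤ b) (hbB : b ≤ B)
    (hab : |a - b| ≤ 2 * Real.sqrt B * Real.sqrt S)
    (hd : |n1 ^ 2 - n2 ^ 2| ≤ D * M) (hD : 0 ≤ D)
    (hC1 : 2 * Real.sqrt B / m ^ 2 ≤ C) (hC2 : B * M / m ^ 4 ≤ C) :
    |(-(η / n1 ^ 2)) * a - (-(η / n2 ^ 2)) * b| ≤ C * |η| * (Real.sqrt S + D) := by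
  have hn1p : 0 < n1 := hm.trans_le hn1
  have hn2p : 0 < n2 := hm.trans_le hn2
  have h1 : (0:ℝ) < n1 ^ 2 := by positivity
  have h2 : (0:ℝ) < n2 ^ 2 := by positivity
  have hm2 : (0:ℝ) < m ^ 2 := by positivity
  have hmn1 : m ^ 2 ≤ n1 ^ 2 := by nlinarith
  have hmn2 : m ^ 2 ≤ n2 ^ 2 := by nlinarith
  have hB0 : 0 ≤ B := hb0.trans hbB
  have hDM : 0 ≤ D * M := (abs_nonneg _).trans hd
  have hsS : 0 ≤ Real.sqrt S := Real.sqrt_nonneg _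
  have key : (-(η / n1 ^ 2)) * a - (-(η / n2 ^ 2)) * b
      = -η * ((a - b) / n1 ^ 2) + -η * (b * (n2 ^ 2 - n1 ^ 2) / (n1 ^ 2 * n2 ^ 2)) := by
    field_simp
    ring
  rw [key]
  have e1 : |(-η) * ((a - b) / n1 ^ 2)| ≤ |η| * (C * Real.sqrt S) := by
    rw [abs_mul, abs_neg, abs_div, abs_of_pos h1]
    refine mul_le_mul_of_nonneg_left ?_ (abs_nonneg η)
    calc |a - b| / n1 ^ 2 ≤ (2 * Real.sqrt B * Real.sqrt S) / m ^ 2 :=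
          div_le_div₀ (by positivity) hab hm2 hmn1
      _ = (2 * Real.sqrt B / m ^ 2) * Real.sqrt S := by ring
      _ ≤ C * Real.sqrt S := mul_le_mul_of_nonneg_right hC1 hsS
  have e2 : |(-η) * (b * (n2 ^ 2 - n1 ^ 2) / (n1 ^ 2 * n2 ^ 2))| ≤ |η| * (C * D) := by
    rw [abs_mul, abs_neg, abs_div, abs_mul, abs_of_nonneg hb0,
      abs_of_pos (mul_pos h1 h2), abs_sub_comm]
    refine mul_le_mul_of_nonneg_left ?_ (abs_nonneg η)
    calc b * |n1 ^ 2 - n2 ^ 2| / (n1 ^ 2 * n2 ^ 2)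
        ≤ (B * (D * M)) / (m ^ 4) :=
          div_le_div₀ (mul_nonneg hB0 hDM)
            (mul_le_mul hbB hd (abs_nonneg _) hB0) (by positivity) (by nlinarith)
      _ = (B * M / m ^ 4) * D := by ring
      _ ≤ C * D := mul_le_mul_of_nonneg_right hC2 hD
  calc |(-η) * ((a - b) / n1 ^ 2) + -η * (b * (n2 ^ 2 - n1 ^ 2) / (n1 ^ 2 * n2 ^ 2))|
      ≤ |(-η) * ((a - b) / n1 ^ 2)| + |(-η) * (b * (n2 ^ 2 - n1 ^ 2) / (n1 ^ 2 * n2 ^ 2))| :=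
        abs_add_le _ _
    _ ≤ |η| * (C * Real.sqrt S) + |η| * (C * D) := add_le_add e1 e2
    _ = C * |η| * (Real.sqrt S + D) := by ring

set_option maxHeartbeats 2000000 in
/-- Lemma 5.2 (Lipschitz continuity of the map `ν → χ` on `[y₀,0]`): if `ν₁, ν₂` satisfy
the standard bounds and lie within `δ` of the Hastings–McLeod solution `ν₀` in
`L² ∩ L^∞` on `(-∞, ε^{-2/3})`, with `δ < ½ min(‖ν₀‖_{L²(-∞,0)}, ν₀(y₀))`, then
`‖χ₁ - χ₂‖_{L^∞(y₀,0)} ≤ C(y₀)|η|(‖ν₁-ν₂‖_{L²} + ‖ν₁-ν₂‖_{L^∞})` with `C(y₀)`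
independent of `ε`. -/
theorem lipschitz_nu_to_chi (ν₀ : ℝ → ℝ)
    (hν₀cont : Continuous ν₀) (hν₀pos : ∀ y : ℝ, 0 < ν₀ y) (hν₀mono : StrictMono ν₀)
    (hν₀int : IntegrableOn (fun s => ν₀ s ^ 2) (Iic 0))
    (Cp Cm δ y₀ : ℝ) (hCp : 1 ≤ Cp) (hCm : 0 < Cm) (hy₀ : y₀ < 0) (hδpos : 0 < δ)
    (hδ : δ < (1/2) * min (Real.sqrt (∫ s in Iic (0:ℝ), ν₀ s ^ 2)) (ν₀ y₀)) :
    ∃ C : ℝ, 0 < C ∧ ∃ ε₀ : ℝ, 0 < ε₀ ∧ ∀ ε : ℝ, 0 < ε → ε < ε₀ → ∀ η : ℝ,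
      ∀ ν₁ ν₂ : ℝ → ℝ,
        (∀ ν : ℝ → ℝ, ν = ν₁ ∨ ν = ν₂ →
          ContinuousOn ν (Iio (ε ^ (-(2:ℝ)/3))) ∧
          (∀ y ∈ Iio (ε ^ (-(2:ℝ)/3)), 0 < ν y) ∧
          IntegrableOn (fun s => ν s ^ 2) (Iic 0) ∧
          (∀ y ∈ Ioo (0:ℝ) (ε ^ (-(2:ℝ)/3)), y / Cp ≤ ν y ^ 2 ∧ ν y ^ 2 ≤ Cp * (1 + y)) ∧
          (∀ y : ℝ, y < 0 → (∫ s in Iic y, ν s ^ 2) / ν y ^ 2 ≤ Cm) ∧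
          (∀ y ∈ Iio (ε ^ (-(2:ℝ)/3)), |ν y - ν₀ y| ≤ δ) ∧
          Real.sqrt (∫ y in Iio (ε ^ (-(2:ℝ)/3)), (ν y - ν₀ y) ^ 2) +
            (⨆ y : Iio (ε ^ (-(2:ℝ)/3)), |ν y - ν₀ y|) ≤ δ) →
        ∀ D : ℝ, (∀ y ∈ Iio (ε ^ (-(2:ℝ)/3)), |ν₁ y - ν₂ y| ≤ D) →
          ∀ y ∈ Icc y₀ (0:ℝ),
            |(-(η / ν₁ y ^ 2) * ∫ s in Iic y, ν₁ s ^ 2) -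
              (-(η / ν₂ y ^ 2) * ∫ s in Iic y, ν₂ s ^ 2)|
              ≤ C * |η| *
                (Real.sqrt (∫ y in Iio (ε ^ (-(2:ℝ)/3)), (ν₁ y - ν₂ y) ^ 2) + D) := by
  set I₀ := ∫ s in Iic (0:ℝ), ν₀ s ^ 2 with hI₀def
  have hI₀0 : 0 ≤ I₀ := setIntegral_nonneg measurableSet_Iic fun s _ => sq_nonneg _
  set m : ℝ := ν₀ y₀ / 2 with hmdef
  have hm : 0 < m := by have := hν₀pos y₀; rw [hmdef]; linarith
  set B : ℝ := 2 * δ ^ 2 + 2 * I₀ with hBdef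
  have hB : 0 < B := by rw [hBdef]; nlinarith
  set M : ℝ := 2 * ν₀ 0 + 2 * δ with hMdef
  have hM : 0 < M := by have := hν₀pos 0; rw [hMdef]; linarith
  set C : ℝ := 2 * Real.sqrt B / m ^ 2 + B * M / m ^ 4 + 1 with hCdef
  have hc1 : 0 ≤ 2 * Real.sqrt B / m ^ 2 := by positivity
  have hc2 : 0 ≤ B * M / m ^ 4 := by positivity
  refine ⟨C, by rw [hCdef]; linarith, 1, one_pos, ?_⟩
  intro ε hε hε1 η ν₁ ν₂ hν D hD y hy
  set e : ℝ := ε ^ (-(2:ℝ)/3) with hedef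
  have h1e : 1 < e := by
    rw [hedef]
    exact (Real.one_lt_rpow_iff_of_pos hε).mpr (Or.inr ⟨hε1, by norm_num⟩)
  have h0e : (0:ℝ) < e := lt_trans one_pos h1e
  have hIic0 : Iic (0:ℝ) ⊆ Iio e := fun s hs => lt_of_le_of_lt hs h0e
  have hIicy : Iic y ⊆ Iic (0:ℝ) := Iic_subset_Iic.mpr hy.2
  have hIicye : Iic y ⊆ Iio e := hIicy.trans hIic0
  have hyIio : y ∈ Iio e := lt_of_le_of_lt hy.2 h0e
  have hδm : δ ≤ m := by
    have h1 : min (Real.sqrt I₀) (ν₀ y₀) ≤ ν₀ y₀ := min_le_right _ _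
    rw [hmdef]; linarith
  obtain ⟨cont₁, pos₁, int₁, -, -, pt₁, l2₁⟩ := hν ν₁ (Or.inl rfl)
  obtain ⟨cont₂, pos₂, int₂, -, -, pt₂, l2₂⟩ := hν ν₂ (Or.inr rfl)
  -- generic facts for a single ν
  have gen : ∀ ν : ℝ → ℝ, ContinuousOn ν (Iio e) →
      IntegrableOn (fun s => ν s ^ 2) (Iic 0) →
      (∀ z ∈ Iio e, |ν z - ν₀ z| ≤ δ) →
      (Real.sqrt (∫ z in Iio e, (ν z - ν₀ z) ^ 2) + (⨆ z : Iio e, |ν z - ν₀ z|) ≤ δ) →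
      IntegrableOn (fun s => (ν s - ν₀ s) ^ 2) (Iio e) ∧
        (∫ s in Iic y, ν s ^ 2) ≤ B := by
    intro ν hcont hint hpt hl2
    have hmeas : ContinuousOn (fun s => (ν s - ν₀ s) ^ 2) (Iio e) :=
      (hcont.sub hν₀cont.continuousOn).pow 2
    have hgint : IntegrableOn (fun s => 2 * ν s ^ 2 + 2 * ν₀ s ^ 2) (Iic 0) :=
      (hint.const_mul 2).add (hν₀int.const_mul 2)
    have hi1 : IntegrableOn (fun s => (ν s - ν₀ s) ^ 2) (Iic 0) := by
      refine Integrable.mono' hgint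
        ((hmeas.mono hIic0).aestronglyMeasurable measurableSet_Iic)
        (ae_of_all _ fun s => ?_)
      rw [Real.norm_eq_abs, abs_of_nonneg (sq_nonneg _)]
      nlinarith [sq_nonneg (ν s + ν₀ s)]
    have hi2 : IntegrableOn (fun s => (ν s - ν₀ s) ^ 2) (Ioo 0 e) := by
      refine Integrable.mono' (g := fun _ => δ ^ 2)
        (integrableOn_const measure_Ioo_lt_top.ne)
        ((hmeas.mono Ioo_subset_Iio_self).aestronglyMeasurable measurableSet_Ioo) ?_
      rw [ae_restrict_iff' measurableSet_Ioo]
      refine ae_of_all _ fun s hs => ?_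
      rw [Real.norm_eq_abs, abs_of_nonneg (sq_nonneg _)]
      have h := hpt s (Ioo_subset_Iio_self hs)
      calc (ν s - ν₀ s) ^ 2 = |ν s - ν₀ s| ^ 2 := (sq_abs _).symm
        _ ≤ δ ^ 2 := pow_le_pow_left₀ (abs_nonneg _) h 2
    have hiIio : IntegrableOn (fun s => (ν s - ν₀ s) ^ 2) (Iio e) := by
      rw [← Iic_union_Ioo_eq_Iio h0e]
      exact hi1.union hi2
    have hsup : 0 ≤ ⨆ z : Iio e, |ν z - ν₀ z| := Real.iSup_nonneg fun _ => abs_nonneg _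
    have hint0 : 0 ≤ ∫ z in Iio e, (ν z - ν₀ z) ^ 2 :=
      setIntegral_nonneg measurableSet_Iio fun s _ => sq_nonneg _
    have hsqrt : Real.sqrt (∫ z in Iio e, (ν z - ν₀ z) ^ 2) ≤ δ := by linarith
    have hIδ : (∫ z in Iio e, (ν z - ν₀ z) ^ 2) ≤ δ ^ 2 := by
      calc (∫ z in Iio e, (ν z - ν₀ z) ^ 2)
          = Real.sqrt (∫ z in Iio e, (ν z - ν₀ z) ^ 2) ^ 2 := (Real.sq_sqrt hint0).symm
        _ ≤ δ ^ 2 := pow_le_pow_left₀ (Real.sqrt_nonneg _) hsqrt 2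
    refine ⟨hiIio, ?_⟩
    have hb1 : (∫ s in Iic y, ν s ^ 2) ≤ ∫ s in Iic (0:ℝ), ν s ^ 2 :=
      setIntegral_mono_set hint (ae_of_all _ fun s => sq_nonneg _)
        (HasSubset.Subset.eventuallyLE hIicy)
    have hb2 : (∫ s in Iic (0:ℝ), ν s ^ 2)
        ≤ ∫ s in Iic (0:ℝ), (2 * (ν s - ν₀ s) ^ 2 + 2 * ν₀ s ^ 2) := by
      refine setIntegral_mono_on hint ((hi1.const_mul 2).add (hν₀int.const_mul 2))
        measurableSet_Iic fun s _ => ?_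
      nlinarith [sq_nonneg (ν s - 2 * ν₀ s)]
    have hb3 : (∫ s in Iic (0:ℝ), (2 * (ν s - ν₀ s) ^ 2 + 2 * ν₀ s ^ 2))
        = 2 * (∫ s in Iic (0:ℝ), (ν s - ν₀ s) ^ 2) + 2 * I₀ := by
      rw [integral_add (hi1.const_mul 2) (hν₀int.const_mul 2),
        integral_const_mul, integral_const_mul]
    have hb4 : (∫ s in Iic (0:ℝ), (ν s - ν₀ s) ^ 2) ≤ ∫ z in Iio e, (ν z - ν₀ z) ^ 2 :=
      setIntegral_mono_set hiIio (ae_of_all _ fun s => sq_nonneg _)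
        (HasSubset.Subset.eventuallyLE hIic0)
    rw [hBdef]
    linarith
  obtain ⟨hiν₁, hb₁⟩ := gen ν₁ cont₁ int₁ pt₁ l2₁
  obtain ⟨hiν₂, hb₂⟩ := gen ν₂ cont₂ int₂ pt₂ l2₂
  -- integrability on Iic y
  have intpt₁ : IntegrableOn (fun s => ν₁ s ^ 2) (Iic y) := int₁.mono_set hIicy
  have intpt₂ : IntegrableOn (fun s => ν₂ s ^ 2) (Iic y) := int₂.mono_set hIicy
  -- the L² quantity S
  set S : ℝ := ∫ z in Iio e, (ν₁ z - ν₂ z) ^ 2 with hSdef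
  have hmeasd : ContinuousOn (fun s => (ν₁ s - ν₂ s) ^ 2) (Iio e) :=
    (cont₁.sub cont₂).pow 2
  have hiS : IntegrableOn (fun s => (ν₁ s - ν₂ s) ^ 2) (Iio e) := by
    refine Integrable.mono' ((hiν₁.const_mul 2).add (hiν₂.const_mul 2))
      (hmeasd.aestronglyMeasurable measurableSet_Iio) (ae_of_all _ fun s => ?_)
    simp only [Pi.add_apply]
    rw [Real.norm_eq_abs, abs_of_nonneg (sq_nonneg _)]
    nlinarith [sq_nonneg (ν₁ s + ν₂ s - 2 * ν₀ s)]
  have hiSy : IntegrableOn (fun s => (ν₁ s - ν₂ s) ^ 2) (Iic y) := hiS.mono_set hIicye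
  have hSy : (∫ s in Iic y, (ν₁ s - ν₂ s) ^ 2) ≤ S :=
    setIntegral_mono_set hiS (ae_of_all _ fun s => sq_nonneg _)
      (HasSubset.Subset.eventuallyLE hIicye)
  have hSy0 : 0 ≤ ∫ s in Iic y, (ν₁ s - ν₂ s) ^ 2 :=
    setIntegral_nonneg measurableSet_Iic fun s _ => sq_nonneg _
  -- Cauchy–Schwarz bound on |a - b|
  have hcy₁ : ContinuousOn ν₁ (Iic y) := cont₁.mono hIicye
  have hcy₂ : ContinuousOn ν₂ (Iic y) := cont₂.mono hIicye
  have hiplus : IntegrableOn (fun s => (ν₁ s + ν₂ s) ^ 2) (Iic y) := by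
    refine Integrable.mono' ((intpt₁.const_mul 2).add (intpt₂.const_mul 2))
      (((hcy₁.add hcy₂).pow 2).aestronglyMeasurable measurableSet_Iic)
      (ae_of_all _ fun s => ?_)
    simp only [Pi.add_apply]
    rw [Real.norm_eq_abs, abs_of_nonneg (sq_nonneg _)]
    nlinarith [sq_nonneg (ν₁ s - ν₂ s)]
  have hplusB : (∫ s in Iic y, (ν₁ s + ν₂ s) ^ 2) ≤ 4 * B := by
    have h1 : (∫ s in Iic y, (ν₁ s + ν₂ s) ^ 2)
        ≤ ∫ s in Iic y, (2 * ν₁ s ^ 2 + 2 * ν₂ s ^ 2) := by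
      refine setIntegral_mono_on hiplus ((intpt₁.const_mul 2).add (intpt₂.const_mul 2))
        measurableSet_Iic fun s _ => ?_
      nlinarith [sq_nonneg (ν₁ s - ν₂ s)]
    have h2 : (∫ s in Iic y, (2 * ν₁ s ^ 2 + 2 * ν₂ s ^ 2))
        = 2 * (∫ s in Iic y, ν₁ s ^ 2) + 2 * (∫ s in Iic y, ν₂ s ^ 2) := by
      rw [integral_add (intpt₁.const_mul 2) (intpt₂.const_mul 2),
        integral_const_mul, integral_const_mul]
    linarith
  have habs : |(∫ s in Iic y, ν₁ s ^ 2) - ∫ s in Iic y, ν₂ s ^ 2|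
      ≤ 2 * Real.sqrt B * Real.sqrt S := by
    rw [← integral_sub intpt₁ intpt₂]
    have hcs := my_cauchy_schwarz (μ := volume.restrict (Iic y))
      ((hcy₁.sub hcy₂).aestronglyMeasurable measurableSet_Iic)
      ((hcy₁.add hcy₂).aestronglyMeasurable measurableSet_Iic) hiSy hiplus
    calc |∫ s in Iic y, (ν₁ s ^ 2 - ν₂ s ^ 2)|
        ≤ ∫ s in Iic y, |ν₁ s ^ 2 - ν₂ s ^ 2| := by
          have h := norm_integral_le_integral_norm (μ := volume.restrict (Iic y))
            (fun s => ν₁ s ^ 2 - ν₂ s ^ 2)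
          simpa [Real.norm_eq_abs] using h
      _ = ∫ s in Iic y, |ν₁ s - ν₂ s| * |ν₁ s + ν₂ s| := by
          refine integral_congr_ae (ae_of_all _ fun s => ?_)
          show |ν₁ s ^ 2 - ν₂ s ^ 2| = |ν₁ s - ν₂ s| * |ν₁ s + ν₂ s|
          rw [← abs_mul]
          congr 1
          ring
      _ ≤ Real.sqrt (∫ s in Iic y, (ν₁ s - ν₂ s) ^ 2) *
            Real.sqrt (∫ s in Iic y, (ν₁ s + ν₂ s) ^ 2) := hcs
      _ ≤ Real.sqrt S * Real.sqrt (4 * B) :=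
          mul_le_mul (Real.sqrt_le_sqrt hSy) (Real.sqrt_le_sqrt hplusB)
            (Real.sqrt_nonneg _) (Real.sqrt_nonneg _)
      _ = 2 * Real.sqrt B * Real.sqrt S := by
          rw [show (4:ℝ) * B = 2 ^ 2 * B by norm_num,
            Real.sqrt_mul (by positivity), Real.sqrt_sq (by norm_num)]
          ring
  -- pointwise bounds at y
  have hmono0 : ν₀ y₀ ≤ ν₀ y := hν₀mono.monotone hy.1
  have hmono1 : ν₀ y ≤ ν₀ 0 := hν₀mono.monotone hy.2
  have hpt1 := abs_le.mp (pt₁ y hyIio)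
  have hpt2 := abs_le.mp (pt₂ y hyIio)
  have hmν₁ : m ≤ ν₁ y := by rw [hmdef] at hδm ⊢; linarith [hpt1.1]
  have hmν₂ : m ≤ ν₂ y := by rw [hmdef] at hδm ⊢; linarith [hpt2.1]
  have hD0 : 0 ≤ D := (abs_nonneg _).trans (hD y hyIio)
  have hdDM : |ν₁ y ^ 2 - ν₂ y ^ 2| ≤ D * M := by
    have heq : |ν₁ y ^ 2 - ν₂ y ^ 2| = |ν₁ y - ν₂ y| * |ν₁ y + ν₂ y| := by
      rw [← abs_mul]
      congr 1
      ring
    have hsum : |ν₁ y + ν₂ y| ≤ M := by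
      rw [abs_of_nonneg (by linarith [hm.trans_le hmν₁, hm.trans_le hmν₂] : 0 ≤ ν₁ y + ν₂ y),
        hMdef]
      linarith [hpt1.2, hpt2.2]
    rw [heq]
    exact mul_le_mul (hD y hyIio) hsum (abs_nonneg _) hD0
  have hb0 : 0 ≤ ∫ s in Iic y, ν₂ s ^ 2 :=
    setIntegral_nonneg measurableSet_Iic fun s _ => sq_nonneg _
  have hC1 : 2 * Real.sqrt B / m ^ 2 ≤ C := by rw [hCdef]; linarith
  have hC2 : B * M / m ^ 4 ≤ C := by rw [hCdef]; linarith
  exact my_key_alg η _ _ (ν₁ y) (ν₂ y) m B S D M C hm hmν₁ hmν₂ hb0 hb₂ habs hdDM hD0 hC1 hC2
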